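/- arXiv:2107.01904 — 2 statements merged into one kernel-verified Lean document; each statement's English description precedes it below -/
import Mathlib

section
/- Bias–variance–covariance decomposition of the generalization error of an ensemble trained on a single dataset with multiple random seeds: GE(f_ens) = E[ (Bias̄(X₀))² + (1/M)·Var̄(X₀) + (1 − 1/M)·Cov̄(X₀) ] + σ². -/
open MeasureTheory ProbabilityTheory Finset

/-- The pointwise mean `f̄(x) = E[f(x; R, Z)]` of a randomized estimator. -/
noncomputable def fbar {Ω 𝒳 ℛ 𝒵 : Type*} [MeasurableSpace Ω] (μ : Measure Ω)
    (R : Ω → ℛ) (Z : Ω → 𝒵) (f : 𝒳 → ℛ → 𝒵 → ℝ) (x : 𝒳) : ℝ :=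
  ∫ ω, f x (R ω) (Z ω) ∂μ

/-- The pointwise variance `Var(f|x) = E[(f(x; R, Z) − f̄(x))²]` of a randomized estimator. -/
noncomputable def varf {Ω 𝒳 ℛ 𝒵 : Type*} [MeasurableSpace Ω] (μ : Measure Ω)
    (R : Ω → ℛ) (Z : Ω → 𝒵) (f : 𝒳 → ℛ → 𝒵 → ℝ) (x : 𝒳) : ℝ :=
  ∫ ω, (f x (R ω) (Z ω) - fbar μ R Z f x) ^ 2 ∂μ

/-- The pointwise covariance of two estimators trained on the same dataset `Z` with seeds
`R` and `R'`. -/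
noncomputable def covf {Ω 𝒳 ℛ 𝒵 : Type*} [MeasurableSpace Ω] (μ : Measure Ω)
    (R R' : Ω → ℛ) (Z : Ω → 𝒵) (f : 𝒳 → ℛ → 𝒵 → ℝ) (x : 𝒳) : ℝ :=
  ∫ ω, (f x (R ω) (Z ω) - fbar μ R Z f x) * (f x (R' ω) (Z ω) - fbar μ R' Z f x) ∂μ

/-- The average bias `Bias̄(x) = (1/M) Σ_m (f̄_m(x) − f*(x))`. -/
noncomputable def biasBar {Ω 𝒳 ℛ 𝒵 : Type*} [MeasurableSpace Ω] (μ : Measure Ω) {M : ℕ}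
    (Rs : Fin M → Ω → ℛ) (Z : Ω → 𝒵) (f : 𝒳 → ℛ → 𝒵 → ℝ) (fstar : 𝒳 → ℝ) (x : 𝒳) : ℝ :=
  (1 / (M : ℝ)) * ∑ m : Fin M, (fbar μ (Rs m) Z f x - fstar x)

/-- The average variance `Var̄(x) = (1/M) Σ_m Var(f_m|x)`. -/
noncomputable def varBar {Ω 𝒳 ℛ 𝒵 : Type*} [MeasurableSpace Ω] (μ : Measure Ω) {M : ℕ}
    (Rs : Fin M → Ω → ℛ) (Z : Ω → 𝒵) (f : 𝒳 → ℛ → 𝒵 → ℝ) (x : 𝒳) : ℝ :=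
  (1 / (M : ℝ)) * ∑ m : Fin M, varf μ (Rs m) Z f x

/-- The average covariance `Cov̄(x) = (1/(M(M−1))) Σ_m Σ_{m'≠m} Cov(f_m, f_{m'}|x)`. -/
noncomputable def covBar {Ω 𝒳 ℛ 𝒵 : Type*} [MeasurableSpace Ω] (μ : Measure Ω) {M : ℕ}
    (Rs : Fin M → Ω → ℛ) (Z : Ω → 𝒵) (f : 𝒳 → ℛ → 𝒵 → ℝ) (x : 𝒳) : ℝ :=
  (1 / ((M : ℝ) * ((M : ℝ) - 1))) *
    ∑ m : Fin M, ∑ m' ∈ Finset.univ \ {m}, covf μ (Rs m) (Rs m') Z f x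

/-- The ensemble estimator `f_ens(x) = (1/M) Σ_m f(x; R⁽ᵐ⁾, Z)`. -/
noncomputable def fens {Ω 𝒳 ℛ 𝒵 : Type*} {M : ℕ}
    (Rs : Fin M → Ω → ℛ) (Z : Ω → 𝒵) (f : 𝒳 → ℛ → 𝒵 → ℝ) (x : 𝒳) (ω : Ω) : ℝ :=
  (1 / (M : ℝ)) * ∑ m : Fin M, f x (Rs m ω) (Z ω)

section Helpers
variable {Ω : Type*} [MeasurableSpace Ω] {μ : Measure Ω}

lemma mulL2 {g h : Ω → ℝ} (hg : MemLp g 2 μ) (hh : MemLp h 2 μ) :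
    Integrable (fun ω => g ω * h ω) μ := by
  have := hh.smul (p := 2) (r := 1) hg
  rwa [memLp_one_iff_integrable, smul_eq_mul] at this


lemma avg_sq_decomp [IsProbabilityMeasure μ] {M : ℕ} (hM : 2 ≤ M) (a : Fin M → Ω → ℝ)
    (ha : ∀ m, MemLp (a m) 2 μ) (c : ℝ) :
    ∫ ω, (c - (1 / (M : ℝ)) * ∑ m, a m ω) ^ 2 ∂μ
      = ((1 / (M : ℝ)) * ∑ m, ((∫ ω, a m ω ∂μ) - c)) ^ 2
        + (1 / (M : ℝ)) * ((1 / (M : ℝ)) * ∑ m, ∫ ω, (a m ω - ∫ ω', a m ω' ∂μ) ^ 2 ∂μ)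
        + (1 - 1 / (M : ℝ)) * ((1 / ((M : ℝ) * ((M : ℝ) - 1))) * ∑ m, ∑ m' ∈ Finset.univ \ {m},
            ∫ ω, (a m ω - ∫ ω', a m ω' ∂μ) * (a m' ω - ∫ ω', a m' ω' ∂μ) ∂μ) := by
  have hM2 : (2 : ℝ) ≤ (M : ℝ) := by exact_mod_cast hM
  have hM0 : (M : ℝ) ≠ 0 := by linarith
  have hM1 : (M : ℝ) - 1 ≠ 0 := by linarith
  set ab : Fin M → ℝ := fun m => ∫ ω, a m ω ∂μ with hab
  set b : Fin M → Ω → ℝ := fun m ω => a m ω - ab m with hbdef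
  have hb : ∀ m, MemLp (b m) 2 μ := fun m => (ha m).sub (memLp_const _)
  have hbint : ∀ m, Integrable (b m) μ := fun m => (hb m).integrable one_le_two
  have hbmul : ∀ m m', Integrable (fun ω => b m ω * b m' ω) μ :=
    fun m m' => mulL2 (hb m) (hb m')
  have hbzero : ∀ m, ∫ ω, b m ω ∂μ = 0 := by
    intro m
    have := integral_sub ((ha m).integrable one_le_two)
      (integrable_const (ab m)) (μ := μ)
    simp only [b]
    rw [this, integral_const]
    simp [hab]
  set K : ℝ := c - (1 / (M : ℝ)) * ∑ m, ab m with hK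
  have h1 : ∀ ω, (∑ m, a m ω) = (∑ m, b m ω) + ∑ m, ab m := by
    intro ω
    simp [b, Finset.sum_sub_distrib]
  have hSint : Integrable (fun ω => ∑ m, b m ω) μ :=
    integrable_finset_sum _ fun m _ => hbint m
  have hSSint : Integrable (fun ω => ∑ m, ∑ m', b m ω * b m' ω) μ :=
    integrable_finset_sum _ fun m _ => integrable_finset_sum _ fun m' _ => hbmul m m'
  have step1 : ∫ ω, (c - (1 / (M : ℝ)) * ∑ m, a m ω) ^ 2 ∂μ
      = ∫ ω, (K ^ 2 + (-(2 * K) * (1 / (M : ℝ))) * (∑ m, b m ω)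
          + (1 / (M : ℝ)) ^ 2 * (∑ m, ∑ m', b m ω * b m' ω)) ∂μ := by
    refine integral_congr_ae (Filter.Eventually.of_forall fun ω => ?_)
    dsimp only
    rw [h1 ω, ← Finset.sum_mul_sum]
    simp only [hK]
    ring
  rw [step1]
  rw [integral_add (by exact (integrable_const _).add (hSint.const_mul _))
      (hSSint.const_mul _), integral_add (integrable_const _) (hSint.const_mul _)]
  rw [integral_const, integral_const_mul, integral_const_mul,
    integral_finset_sum _ fun m _ => hbint m]
  simp only [hbzero, Finset.sum_const_zero, mul_zero, add_zero]
  have hdouble : ∫ ω, (∑ m, ∑ m', b m ω * b m' ω) ∂μ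
      = ∑ m, ∑ m', ∫ ω, b m ω * b m' ω ∂μ := by
    rw [integral_finset_sum _ fun m _ =>
      integrable_finset_sum _ fun m' _ => hbmul m m']
    exact Finset.sum_congr rfl fun m _ => integral_finset_sum _ fun m' _ => hbmul m m'
  rw [hdouble]
  have hsplit : ∑ m, ∑ m', ∫ ω, b m ω * b m' ω ∂μ
      = (∑ m, ∫ ω, b m ω ^ 2 ∂μ)
        + ∑ m : Fin M, ∑ m' ∈ Finset.univ \ {m}, ∫ ω, b m ω * b m' ω ∂μ := by
    rw [← Finset.sum_add_distrib]
    refine Finset.sum_congr rfl fun m _ => ?_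
    rw [← Finset.erase_eq, ← Finset.add_sum_erase _ _ (Finset.mem_univ m)]
    congr 1
    exact integral_congr_ae (Filter.Eventually.of_forall fun ω => by dsimp only; ring)
  rw [hsplit]
  simp only [probReal_univ, one_smul]
  have e1 : ∀ m : Fin M, (∫ ω, (a m ω - ∫ ω', a m ω' ∂μ) ^ 2 ∂μ) = ∫ ω, b m ω ^ 2 ∂μ :=
    fun m => rfl
  have e2 : ∀ m m' : Fin M, (∫ ω, (a m ω - ∫ ω', a m ω' ∂μ) * (a m' ω - ∫ ω', a m' ω' ∂μ) ∂μ)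
      = ∫ ω, b m ω * b m' ω ∂μ := fun m m' => rfl
  have hbias : ∑ m : Fin M, ((∫ ω, a m ω ∂μ) - c) = (∑ m, ab m) - (M : ℝ) * c := by
    rw [Finset.sum_sub_distrib]
    simp [hab, Finset.card_univ, nsmul_eq_mul]
  simp only [e1, e2, hbias]
  rw [hK]
  field_simp
  ring

end Helpers

/-- Bias–variance–covariance decomposition of the generalization error of an ensemble trained
on a single dataset with multiple random seeds:
`GE(f_ens) = E[(Bias̄(X₀))² + (1/M) Var̄(X₀) + (1 − 1/M) Cov̄(X₀)] + σ²`. -/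
theorem ensemble_generalization_error_decomposition
    {Ω 𝒳 ℛ 𝒵 : Type*} [MeasurableSpace Ω] [MeasurableSpace 𝒳]
    [MeasurableSpace ℛ] [MeasurableSpace 𝒵]
    (μ : Measure Ω) [IsProbabilityMeasure μ]
    (X₀ : Ω → 𝒳) (Y₀ : Ω → ℝ) (Z : Ω → 𝒵)
    (M : ℕ) (hM : 2 ≤ M) (Rs : Fin M → Ω → ℛ)
    (hX₀ : Measurable X₀) (hY₀ : Measurable Y₀) (hZ : Measurable Z)
    (hRs : ∀ m, Measurable (Rs m))
    (hY₀L2 : MemLp Y₀ 2 μ)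
    (f : 𝒳 → ℛ → 𝒵 → ℝ) (hf : Measurable fun p : 𝒳 × ℛ × 𝒵 => f p.1 p.2.1 p.2.2)
    (hfL2 : ∀ x m, MemLp (fun ω => f x (Rs m ω) (Z ω)) 2 μ)
    (hfX₀L2 : ∀ m, MemLp (fun ω => f (X₀ ω) (Rs m ω) (Z ω)) 2 μ)
    (hindep : IndepFun (fun ω => ((fun m => Rs m ω), Z ω)) (fun ω => (X₀ ω, Y₀ ω)) μ)
    (fstar : 𝒳 → ℝ) (hfstar : Measurable fstar)
    (hreg : (fun ω => fstar (X₀ ω)) =ᵐ[μ] μ[Y₀ | MeasurableSpace.comap X₀ inferInstance])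
    (hfbarL2 : ∀ m, MemLp (fun ω => fbar μ (Rs m) Z f (X₀ ω)) 2 μ)
    (hfstarL2 : MemLp (fun ω => fstar (X₀ ω)) 2 μ)
    (hvarInt : Integrable (fun ω => varBar μ Rs Z f (X₀ ω)) μ)
    (hcovInt : Integrable (fun ω => covBar μ Rs Z f (X₀ ω)) μ) :
    ∫ ω, (Y₀ ω - fens Rs Z f (X₀ ω) ω) ^ 2 ∂μ
      = ∫ ω, (biasBar μ Rs Z f fstar (X₀ ω) ^ 2
            + (1 / (M : ℝ)) * varBar μ Rs Z f (X₀ ω)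
            + (1 - 1 / (M : ℝ)) * covBar μ Rs Z f (X₀ ω)) ∂μ
        + ∫ ω, (fstar (X₀ ω) - Y₀ ω) ^ 2 ∂μ := by

  classical
  have hM2 : (2 : ℝ) ≤ (M : ℝ) := by exact_mod_cast hM
  have hM0 : (M : ℝ) ≠ 0 := by linarith
  -- abbreviations
  set e : Ω → ℝ := fun ω => fstar (X₀ ω) with he
  set g : Ω → ℝ := fun ω => fens Rs Z f (X₀ ω) ω with hg
  set W : Ω → (Fin M → ℛ) × 𝒵 := fun ω => (fun m => Rs m ω, Z ω) with hWdef
  set T : Ω → 𝒳 × ℝ := fun ω => (X₀ ω, Y₀ ω) with hTdef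
  have hW : Measurable W := (measurable_pi_lambda _ hRs).prodMk hZ
  have hT : Measurable T := hX₀.prodMk hY₀
  haveI : IsProbabilityMeasure (μ.map W) := Measure.isProbabilityMeasure_map hW.aemeasurable
  haveI : IsProbabilityMeasure (μ.map X₀) := Measure.isProbabilityMeasure_map hX₀.aemeasurable
  haveI : IsProbabilityMeasure (μ.map T) := Measure.isProbabilityMeasure_map hT.aemeasurable
  -- L² facts
  have hgL2 : MemLp g 2 μ := by
    have h1 : MemLp (fun ω => ∑ m : Fin M, f (X₀ ω) (Rs m ω) (Z ω)) 2 μ :=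
      memLp_finset_sum _ (fun m _ => hfX₀L2 m)
    exact h1.const_mul _
  have hq2 : MemLp (fun ω => Y₀ ω - e ω) 2 μ := hY₀L2.sub hfstarL2
  have hegL2 : MemLp (fun ω => e ω - g ω) 2 μ := hfstarL2.sub hgL2
  have hAint : Integrable (fun ω => (Y₀ ω - e ω) ^ 2) μ := hq2.integrable_sq
  have hCint : Integrable (fun ω => (e ω - g ω) ^ 2) μ := hegL2.integrable_sq
  have hBint : Integrable (fun ω => (Y₀ ω - e ω) * (e ω - g ω)) μ := mulL2 hq2 hegL2
  -- measurability of the parametrized estimators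
  have hfm2 : ∀ m : Fin M,
      Measurable (fun p : 𝒳 × ((Fin M → ℛ) × 𝒵) => f p.1 (p.2.1 m) p.2.2) := fun m =>
    hf.comp (show Measurable fun p : 𝒳 × ((Fin M → ℛ) × 𝒵) => (p.1, (p.2.1 m, p.2.2)) from
      measurable_fst.prodMk
        (((measurable_pi_apply m).comp (measurable_fst.comp measurable_snd)).prodMk
          (measurable_snd.comp measurable_snd)))
  have hGm : Measurable (fun p : 𝒳 × ((Fin M → ℛ) × 𝒵) =>
      fstar p.1 - (1 / (M : ℝ)) * ∑ m : Fin M, f p.1 (p.2.1 m) p.2.2) :=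
    (hfstar.comp measurable_fst).sub
      ((Finset.measurable_sum _ fun m _ => hfm2 m).const_mul _)
  -- cross term vanishes
  have hcross : ∫ ω, (Y₀ ω - e ω) * (e ω - g ω) ∂μ = 0 := by
    set Ψ : ((Fin M → ℛ) × 𝒵) × (𝒳 × ℝ) → ℝ := fun p =>
      (p.2.2 - fstar p.2.1) *
        (fstar p.2.1 - (1 / (M : ℝ)) * ∑ m : Fin M, f p.2.1 (p.1.1 m) p.1.2) with hΨdef
    have hΨm : Measurable Ψ := by
      apply Measurable.mul
      · exact (measurable_snd.comp measurable_snd).sub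
          (hfstar.comp (measurable_fst.comp measurable_snd))
      · exact (hGm.comp ((measurable_fst.comp measurable_snd).prodMk measurable_fst))
    have hmapWT : μ.map (fun ω => (W ω, T ω)) = (μ.map W).prod (μ.map T) :=
      (indepFun_iff_map_prod_eq_prod_map_map hW.aemeasurable hT.aemeasurable).mp hindep
    have hBint' : Integrable (fun ω => Ψ (W ω, T ω)) μ := hBint
    have hint1 : Integrable Ψ (μ.map fun ω => (W ω, T ω)) :=
      (integrable_map_measure hΨm.aestronglyMeasurable
        (hW.aemeasurable.prodMk hT.aemeasurable)).mpr hBint'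
    have hint2 : Integrable Ψ ((μ.map W).prod (μ.map T)) := hmapWT ▸ hint1
    have key : ∫ ω, (Y₀ ω - e ω) * (e ω - g ω) ∂μ
        = ∫ w, ∫ t, Ψ (w, t) ∂(μ.map T) ∂(μ.map W) := by
      calc ∫ ω, (Y₀ ω - e ω) * (e ω - g ω) ∂μ
          = ∫ ω, Ψ (W ω, T ω) ∂μ := rfl
        _ = ∫ p, Ψ p ∂(μ.map fun ω => (W ω, T ω)) :=
            (integral_map (hW.aemeasurable.prodMk hT.aemeasurable)
              hΨm.aestronglyMeasurable).symm
        _ = ∫ p, Ψ p ∂((μ.map W).prod (μ.map T)) := by rw [hmapWT]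
        _ = ∫ w, ∫ t, Ψ (w, t) ∂(μ.map T) ∂(μ.map W) := integral_prod _ hint2
    rw [key]
    apply integral_eq_zero_of_ae
    filter_upwards [hint2.prod_right_ae] with w hw
    have hΨwm : Measurable (fun t : 𝒳 × ℝ => Ψ (w, t)) := hΨm.comp measurable_prodMk_left
    rw [integral_map hT.aemeasurable hΨwm.aestronglyMeasurable]
    have hwint : Integrable (fun ω => Ψ (w, T ω)) μ :=
      (integrable_map_measure hΨwm.aestronglyMeasurable hT.aemeasurable).mp hw
    -- conditional expectation argument
    set m' : MeasurableSpace Ω := MeasurableSpace.comap X₀ inferInstance with hm'def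
    have hm' : m' ≤ _ := hX₀.comap_le
    haveI : IsFiniteMeasure (μ.trim hm') := isFiniteMeasure_trim hm'
    have hX₀m' : Measurable[m'] X₀ := fun s hs => ⟨s, hs, rfl⟩
    set h : 𝒳 → ℝ := fun x => fstar x - (1 / (M : ℝ)) * ∑ m : Fin M, f x (w.1 m) w.2
      with hhdef
    have hhm : Measurable h :=
      hGm.comp (measurable_id.prodMk measurable_const)
    have hφsm : StronglyMeasurable[m'] (fun ω => h (X₀ ω)) :=
      (hhm.comp hX₀m').stronglyMeasurable
    have hqint : Integrable (fun ω => Y₀ ω - e ω) μ := hq2.integrable one_le_two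
    have hprod : Integrable ((fun ω => h (X₀ ω)) * fun ω => Y₀ ω - e ω) μ := by
      refine hwint.congr (Filter.Eventually.of_forall fun ω => ?_)
      simp only [Pi.mul_apply]
      exact mul_comm _ _
    have hce := condExp_mul_of_stronglyMeasurable_left hφsm hprod hqint
    have hq0 : μ[fun ω => Y₀ ω - e ω | m'] =ᵐ[μ] 0 := by
      have h1 : μ[fun ω => Y₀ ω - e ω | m'] =ᵐ[μ] μ[Y₀ | m'] - μ[e | m'] := by
        have := condExp_sub (m := m') (μ := μ) (hY₀L2.integrable one_le_two)
          (hfstarL2.integrable one_le_two)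
        exact this
      have h2 : μ[e | m'] = e :=
        condExp_of_stronglyMeasurable hm'
          ((hfstar.comp hX₀m').stronglyMeasurable) (hfstarL2.integrable one_le_two)
      filter_upwards [h1, hreg] with ω hω hregω
      rw [hω]
      simp only [Pi.sub_apply, Pi.zero_apply, h2]
      rw [← hregω]
      simp [he]
    have hΨw : (fun ω => Ψ (w, T ω)) = (fun ω => h (X₀ ω)) * fun ω => Y₀ ω - e ω := by
      funext ω
      simp only [Pi.mul_apply]
      exact mul_comm _ _
    rw [hΨw, ← integral_condExp (μ := μ) (f := (fun ω => h (X₀ ω)) * fun ω => Y₀ ω - e ω) hm']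
    have hzero : μ[(fun ω => h (X₀ ω)) * fun ω => Y₀ ω - e ω | m'] =ᵐ[μ] 0 := by
      filter_upwards [hce, hq0] with ω h1 h2
      rw [h1]
      simp only [Pi.mul_apply, h2, Pi.zero_apply, mul_zero]
    rw [integral_congr_ae hzero]
    simp
  -- quadratic term via Fubini
  have hquad : ∫ ω, (e ω - g ω) ^ 2 ∂μ
      = ∫ ω, (biasBar μ Rs Z f fstar (X₀ ω) ^ 2
          + (1 / (M : ℝ)) * varBar μ Rs Z f (X₀ ω)
          + (1 - 1 / (M : ℝ)) * covBar μ Rs Z f (X₀ ω)) ∂μ := by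
    set Φ : 𝒳 × ((Fin M → ℛ) × 𝒵) → ℝ := fun p =>
      (fstar p.1 - (1 / (M : ℝ)) * ∑ m : Fin M, f p.1 (p.2.1 m) p.2.2) ^ 2 with hΦdef
    have hΦm : Measurable Φ := hGm.pow_const 2
    have hindXW : IndepFun X₀ W μ := by
      have := (hindep.comp measurable_id measurable_fst).symm
      exact this
    have hmapXW : μ.map (fun ω => (X₀ ω, W ω)) = (μ.map X₀).prod (μ.map W) :=
      (indepFun_iff_map_prod_eq_prod_map_map hX₀.aemeasurable hW.aemeasurable).mp hindXW
    have hCint' : Integrable (fun ω => Φ (X₀ ω, W ω)) μ := hCint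
    have hint1 : Integrable Φ (μ.map fun ω => (X₀ ω, W ω)) :=
      (integrable_map_measure hΦm.aestronglyMeasurable
        (hX₀.aemeasurable.prodMk hW.aemeasurable)).mpr hCint'
    have hint2 : Integrable Φ ((μ.map X₀).prod (μ.map W)) := hmapXW ▸ hint1
    have hInner : StronglyMeasurable (fun x => ∫ w, Φ (x, w) ∂(μ.map W)) :=
      hΦm.stronglyMeasurable.integral_prod_right'
    calc ∫ ω, (e ω - g ω) ^ 2 ∂μ
        = ∫ ω, Φ (X₀ ω, W ω) ∂μ := rfl
      _ = ∫ p, Φ p ∂(μ.map fun ω => (X₀ ω, W ω)) :=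
          (integral_map (hX₀.aemeasurable.prodMk hW.aemeasurable)
            hΦm.aestronglyMeasurable).symm
      _ = ∫ p, Φ p ∂((μ.map X₀).prod (μ.map W)) := by rw [hmapXW]
      _ = ∫ x, ∫ w, Φ (x, w) ∂(μ.map W) ∂(μ.map X₀) := integral_prod _ hint2
      _ = ∫ ω, ∫ w, Φ (X₀ ω, w) ∂(μ.map W) ∂μ :=
          integral_map hX₀.aemeasurable hInner.aestronglyMeasurable
      _ = ∫ ω, (biasBar μ Rs Z f fstar (X₀ ω) ^ 2
            + (1 / (M : ℝ)) * varBar μ Rs Z f (X₀ ω)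
            + (1 - 1 / (M : ℝ)) * covBar μ Rs Z f (X₀ ω)) ∂μ := by
          refine integral_congr_ae (Filter.Eventually.of_forall fun ω => ?_)
          dsimp only
          have hΦxm : Measurable (fun w : (Fin M → ℛ) × 𝒵 => Φ (X₀ ω, w)) :=
            hΦm.comp measurable_prodMk_left
          rw [integral_map hW.aemeasurable hΦxm.aestronglyMeasurable]
          have := avg_sq_decomp (μ := μ) hM
            (fun m ω' => f (X₀ ω) (Rs m ω') (Z ω')) (hfL2 (X₀ ω)) (fstar (X₀ ω))
          simp only [biasBar, varBar, covBar, fbar, varf, covf]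
          exact this
  -- assemble
  have hsigma : ∫ ω, (Y₀ ω - e ω) ^ 2 ∂μ = ∫ ω, (fstar (X₀ ω) - Y₀ ω) ^ 2 ∂μ :=
    integral_congr_ae (Filter.Eventually.of_forall fun ω => by simp only [he]; ring)
  calc ∫ ω, (Y₀ ω - fens Rs Z f (X₀ ω) ω) ^ 2 ∂μ
      = ∫ ω, ((Y₀ ω - e ω) ^ 2
          + (2 * ((Y₀ ω - e ω) * (e ω - g ω)) + (e ω - g ω) ^ 2)) ∂μ := by
        refine integral_congr_ae (Filter.Eventually.of_forall fun ω => ?_)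
        simp only [he, hg]
        ring
    _ = ∫ ω, (Y₀ ω - e ω) ^ 2 ∂μ
          + ∫ ω, (2 * ((Y₀ ω - e ω) * (e ω - g ω)) + (e ω - g ω) ^ 2) ∂μ :=
        integral_add hAint ((hBint.const_mul 2).add hCint)
    _ = ∫ ω, (Y₀ ω - e ω) ^ 2 ∂μ
          + (∫ ω, 2 * ((Y₀ ω - e ω) * (e ω - g ω)) ∂μ + ∫ ω, (e ω - g ω) ^ 2 ∂μ) := by
        rw [integral_add (hBint.const_mul 2) hCint]
    _ = ∫ ω, (Y₀ ω - e ω) ^ 2 ∂μ + ∫ ω, (e ω - g ω) ^ 2 ∂μ := by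
        rw [integral_const_mul, hcross, mul_zero, zero_add]
    _ = ∫ ω, (biasBar μ Rs Z f fstar (X₀ ω) ^ 2
            + (1 / (M : ℝ)) * varBar μ Rs Z f (X₀ ω)
            + (1 - 1 / (M : ℝ)) * covBar μ Rs Z f (X₀ ω)) ∂μ
          + ∫ ω, (fstar (X₀ ω) - Y₀ ω) ^ 2 ∂μ := by
        rw [hsigma, hquad, add_comm]
end

section
/- For an ensemble of M estimators built from the same function f, the same dataset Z, and random seeds R⁽¹⁾, …, R⁽ᴹ⁾, the average pairwise covariance never exceeds the average variance: Cov̄(x) ≤ Var̄(x) for every x ∈ 𝒳. Consequently, if each pair (R⁽ᵐ⁾, Z) has the same joint distribution as (R, Z) (so that the M estimators are identical and differ only in the random numbers used), then GE(f_ens) ≤ GE(f). -/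
open MeasureTheory ProbabilityTheory Finset

lemma aux_int_half {Ω : Type*} [MeasurableSpace Ω] {μ : Measure Ω} {a b : Ω → ℝ}
    (ha : MemLp a 2 μ) (hb : MemLp b 2 μ) :
    Integrable (fun ω => (a ω ^ 2 + b ω ^ 2) / 2) μ := by
  have h := (ha.integrable_sq.add hb.integrable_sq).div_const 2
  simpa using h

lemma aux_int_mul {Ω : Type*} [MeasurableSpace Ω] {μ : Measure Ω} {a b : Ω → ℝ}
    (ha : MemLp a 2 μ) (hb : MemLp b 2 μ) : Integrable (fun ω => a ω * b ω) μ := by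
  refine (aux_int_half ha hb).mono'
    (ha.aestronglyMeasurable.mul hb.aestronglyMeasurable)
    (Filter.Eventually.of_forall fun ω => ?_)
  rw [Real.norm_eq_abs, abs_mul]
  nlinarith [sq_nonneg (|a ω| - |b ω|), sq_abs (a ω), sq_abs (b ω),
    abs_nonneg (a ω), abs_nonneg (b ω)]

lemma aux_int_mul_le {Ω : Type*} [MeasurableSpace Ω] {μ : Measure Ω} {a b : Ω → ℝ}
    (ha : MemLp a 2 μ) (hb : MemLp b 2 μ) :
    ∫ ω, a ω * b ω ∂μ ≤ ((∫ ω, a ω ^ 2 ∂μ) + ∫ ω, b ω ^ 2 ∂μ) / 2 := by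
  have h := integral_mono (aux_int_mul ha hb) (aux_int_half ha hb)
    (fun ω => by nlinarith [sq_nonneg (a ω - b ω)])
  rwa [integral_div, integral_add ha.integrable_sq hb.integrable_sq] at h

lemma aux_expand {Ω : Type*} [MeasurableSpace Ω] {μ : Measure Ω} {Y h : Ω → ℝ}
    (hY : MemLp Y 2 μ) (hh : MemLp h 2 μ) :
    ∫ ω, (Y ω - h ω) ^ 2 ∂μ
      = (∫ ω, Y ω ^ 2 ∂μ) - 2 * (∫ ω, Y ω * h ω ∂μ) + ∫ ω, h ω ^ 2 ∂μ := by
  have h1 : ∀ ω, (Y ω - h ω) ^ 2 = (Y ω ^ 2 - 2 * (Y ω * h ω)) + h ω ^ 2 := fun ω => by ring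
  simp_rw [h1]
  have hi1 : Integrable (fun ω => Y ω ^ 2 - 2 * (Y ω * h ω)) μ := by
    exact hY.integrable_sq.sub ((aux_int_mul hY hh).const_mul 2)
  have hi2 : Integrable (fun ω => 2 * (Y ω * h ω)) μ := by
    exact (aux_int_mul hY hh).const_mul 2
  rw [integral_add hi1 hh.integrable_sq, integral_sub hY.integrable_sq hi2,
    integral_const_mul]

/-- For an ensemble built from the same `f`, the same dataset `Z`, and seeds `R⁽¹⁾, …, R⁽ᴹ⁾`,
the average pairwise covariance never exceeds the average variance: `Cov̄(x) ≤ Var̄(x)` for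
every `x`.  Consequently, if each pair `(R⁽ᵐ⁾, Z)` has the same joint distribution as
`(R, Z)` (the `M` estimators are identical and differ only in the random numbers used),
then `GE(f_ens) ≤ GE(f)`. -/
theorem covBar_le_varBar_and_ensemble_GE_le_GE
    {Ω 𝒳 ℛ 𝒵 : Type*} [MeasurableSpace Ω] [MeasurableSpace 𝒳]
    [MeasurableSpace ℛ] [MeasurableSpace 𝒵]
    (μ : Measure Ω) [IsProbabilityMeasure μ]
    (X₀ : Ω → 𝒳) (Y₀ : Ω → ℝ) (Z : Ω → 𝒵) (R : Ω → ℛ)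
    (M : ℕ) (hM : 2 ≤ M) (Rs : Fin M → Ω → ℛ)
    (hX₀ : Measurable X₀) (hY₀ : Measurable Y₀) (hZ : Measurable Z) (hR : Measurable R)
    (hRs : ∀ m, Measurable (Rs m))
    (hY₀L2 : MemLp Y₀ 2 μ)
    (f : 𝒳 → ℛ → 𝒵 → ℝ) (hf : Measurable fun p : 𝒳 × ℛ × 𝒵 => f p.1 p.2.1 p.2.2)
    (hfL2 : ∀ x, MemLp (fun ω => f x (R ω) (Z ω)) 2 μ)
    (hfmL2 : ∀ x m, MemLp (fun ω => f x (Rs m ω) (Z ω)) 2 μ)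
    (hfX₀L2 : MemLp (fun ω => f (X₀ ω) (R ω) (Z ω)) 2 μ)
    (hfmX₀L2 : ∀ m, MemLp (fun ω => f (X₀ ω) (Rs m ω) (Z ω)) 2 μ)
    (hindep : IndepFun (fun ω => (R ω, Z ω)) (fun ω => (X₀ ω, Y₀ ω)) μ)
    (hindepEns : IndepFun (fun ω => ((fun m => Rs m ω), Z ω)) (fun ω => (X₀ ω, Y₀ ω)) μ)
    (hfbarL2 : MemLp (fun ω => fbar μ R Z f (X₀ ω)) 2 μ)
    (hfbarmL2 : ∀ m, MemLp (fun ω => fbar μ (Rs m) Z f (X₀ ω)) 2 μ)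
    (hvarInt : Integrable (fun ω => varf μ R Z f (X₀ ω)) μ)
    (hvarBarInt : Integrable (fun ω => varBar μ Rs Z f (X₀ ω)) μ)
    (hcovBarInt : Integrable (fun ω => covBar μ Rs Z f (X₀ ω)) μ) :
    (∀ x : 𝒳, covBar μ Rs Z f x ≤ varBar μ Rs Z f x)
      ∧ ((∀ m, IdentDistrib (fun ω => (Rs m ω, Z ω)) (fun ω => (R ω, Z ω)) μ μ) →
          ∫ ω, (Y₀ ω - fens Rs Z f (X₀ ω) ω) ^ 2 ∂μ
            ≤ ∫ ω, (Y₀ ω - f (X₀ ω) (R ω) (Z ω)) ^ 2 ∂μ) := by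
  have hMpos : (0:ℝ) < M := by exact_mod_cast Nat.lt_of_lt_of_le two_pos hM
  have hM1pos : (0:ℝ) < (M:ℝ) - 1 := by
    have : (2:ℝ) ≤ M := by exact_mod_cast hM
    linarith
  constructor
  · -- Part 1 : Cov̄(x) ≤ Var̄(x)
    intro x
    set v : Fin M → ℝ := fun m => varf μ (Rs m) Z f x with hv
    have haL2 : ∀ m : Fin M,
        MemLp (fun ω => f x (Rs m ω) (Z ω) - fbar μ (Rs m) Z f x) 2 μ :=
      fun m => (hfmL2 x m).sub (memLp_const _)
    have key : ∀ m m' : Fin M,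
        covf μ (Rs m) (Rs m') Z f x ≤ (v m + v m') / 2 := by
      intro m m'
      simpa [covf, varf, hv] using aux_int_mul_le (haL2 m) (haL2 m')
    have hsum : ∑ m : Fin M, ∑ m' ∈ Finset.univ \ {m}, covf μ (Rs m) (Rs m') Z f x
        ≤ ((M:ℝ) - 1) * ∑ m : Fin M, v m := by
      have step1 : ∑ m : Fin M, ∑ m' ∈ Finset.univ \ {m}, covf μ (Rs m) (Rs m') Z f x
          ≤ ∑ m : Fin M, ∑ m' ∈ Finset.univ \ {m}, (v m + v m') / 2 :=
        Finset.sum_le_sum fun m _ => Finset.sum_le_sum fun m' _ => key m m'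
      refine step1.trans_eq ?_
      have hinner : ∀ m : Fin M, ∑ m' ∈ Finset.univ \ {m}, (v m + v m') / 2
          = (((M:ℝ) - 1) * v m + ((∑ m' : Fin M, v m') - v m)) / 2 := by
        intro m
        rw [← Finset.sum_div, Finset.sum_add_distrib, Finset.sum_const,
          Finset.sum_sdiff_eq_sub (Finset.subset_univ {m}), Finset.sum_singleton,
          Finset.card_sdiff_of_subset (Finset.subset_univ {m}), Finset.card_univ,
          Finset.card_singleton, Fintype.card_fin, nsmul_eq_mul,
          Nat.cast_sub (le_trans one_le_two hM), Nat.cast_one]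
      simp_rw [hinner]
      rw [← Finset.sum_div, Finset.sum_add_distrib, ← Finset.mul_sum, Finset.sum_sub_distrib,
        Finset.sum_const, Finset.card_univ, Fintype.card_fin, nsmul_eq_mul]
      ring
    unfold covBar varBar
    calc (1 / ((M:ℝ) * ((M:ℝ) - 1))) *
          ∑ m : Fin M, ∑ m' ∈ Finset.univ \ {m}, covf μ (Rs m) (Rs m') Z f x
        ≤ (1 / ((M:ℝ) * ((M:ℝ) - 1))) * (((M:ℝ) - 1) * ∑ m : Fin M, v m) :=
          mul_le_mul_of_nonneg_left hsum (by positivity)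
      _ = (1 / (M:ℝ)) * ∑ m : Fin M, v m := by
          field_simp
  · -- Part 2 : GE(f_ens) ≤ GE(f)
    intro hid
    set W : Ω → 𝒳 × ℝ := fun ω => (X₀ ω, Y₀ ω) with hWdef
    have hW : AEMeasurable W μ := (hX₀.prodMk hY₀).aemeasurable
    have hV : AEMeasurable (fun ω => (R ω, Z ω)) μ := (hR.prodMk hZ).aemeasurable
    have hVm : ∀ m, AEMeasurable (fun ω => (Rs m ω, Z ω)) μ :=
      fun m => ((hRs m).prodMk hZ).aemeasurable
    have hindm : ∀ m : Fin M, IndepFun (fun ω => (Rs m ω, Z ω)) W μ := by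
      intro m
      exact hindepEns.comp
        (show Measurable fun p : (Fin M → ℛ) × 𝒵 => (p.1 m, p.2) from
          ((measurable_pi_apply m).comp measurable_fst).prodMk measurable_snd)
        measurable_id
    have hD : ∀ m : Fin M, IdentDistrib (fun ω => (W ω, (Rs m ω, Z ω)))
        (fun ω => (W ω, (R ω, Z ω))) μ μ := by
      intro m
      refine ⟨hW.prodMk (hVm m), hW.prodMk hV, ?_⟩
      rw [(indepFun_iff_map_prod_eq_prod_map_map hW (hVm m)).1 (hindm m).symm,
        (indepFun_iff_map_prod_eq_prod_map_map hW hV).1 hindep.symm,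
        (hid m).map_eq]
    have hF : Measurable fun p : (𝒳 × ℝ) × ℛ × 𝒵 => f p.1.1 p.2.1 p.2.2 :=
      hf.comp (measurable_fst.fst.prodMk measurable_snd)
    set g : Ω → ℝ := fun ω => f (X₀ ω) (R ω) (Z ω) with hgdef
    set gm : Fin M → Ω → ℝ := fun m ω => f (X₀ ω) (Rs m ω) (Z ω) with hgmdef
    have hEq1 : ∀ m : Fin M, ∫ ω, Y₀ ω * gm m ω ∂μ = ∫ ω, Y₀ ω * g ω ∂μ := by
      intro m
      exact ((hD m).comp (show Measurable fun p : (𝒳 × ℝ) × ℛ × 𝒵 =>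
        p.1.2 * f p.1.1 p.2.1 p.2.2 from measurable_fst.snd.mul hF)).integral_eq
    have hEq2 : ∀ m : Fin M, ∫ ω, gm m ω ^ 2 ∂μ = ∫ ω, g ω ^ 2 ∂μ := by
      intro m
      exact ((hD m).comp (show Measurable fun p : (𝒳 × ℝ) × ℛ × 𝒵 =>
        f p.1.1 p.2.1 p.2.2 ^ 2 from hF.pow_const 2)).integral_eq
    have hcross : ∀ m m' : Fin M, ∫ ω, gm m ω * gm m' ω ∂μ ≤ ∫ ω, g ω ^ 2 ∂μ := by
      intro m m'
      calc ∫ ω, gm m ω * gm m' ω ∂μ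
          ≤ ((∫ ω, gm m ω ^ 2 ∂μ) + ∫ ω, gm m' ω ^ 2 ∂μ) / 2 :=
            aux_int_mul_le (hfmX₀L2 m) (hfmX₀L2 m')
        _ = ∫ ω, g ω ^ 2 ∂μ := by rw [hEq2 m, hEq2 m']; ring
    have hensEq : (fun ω => fens Rs Z f (X₀ ω) ω)
        = fun ω => (1 / (M:ℝ)) * ∑ m : Fin M, gm m ω := rfl
    have hensL2 : MemLp (fun ω => fens Rs Z f (X₀ ω) ω) 2 μ := by
      rw [hensEq]
      exact (memLp_finset_sum Finset.univ fun m _ => hfmX₀L2 m).const_mul _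
    have hlin : ∫ ω, Y₀ ω * fens Rs Z f (X₀ ω) ω ∂μ = ∫ ω, Y₀ ω * g ω ∂μ := by
      have h1 : (fun ω => Y₀ ω * fens Rs Z f (X₀ ω) ω)
          = fun ω => (1 / (M:ℝ)) * ∑ m : Fin M, Y₀ ω * gm m ω := by
        funext ω
        simp only [fens, hgmdef, Finset.mul_sum]
        exact Finset.sum_congr rfl fun m _ => by ring
      rw [h1, integral_const_mul,
        integral_finset_sum _ (fun m _ => aux_int_mul hY₀L2 (hfmX₀L2 m))]
      rw [Finset.sum_congr rfl fun m _ => hEq1 m]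
      rw [Finset.sum_const, Finset.card_univ, Fintype.card_fin, nsmul_eq_mul]
      field_simp
    have hquad : ∫ ω, fens Rs Z f (X₀ ω) ω ^ 2 ∂μ ≤ ∫ ω, g ω ^ 2 ∂μ := by
      have h1 : (fun ω => fens Rs Z f (X₀ ω) ω ^ 2)
          = fun ω => (1 / (M:ℝ)) ^ 2 * ∑ m : Fin M, ∑ m' : Fin M, gm m ω * gm m' ω := by
        funext ω
        simp only [fens, hgmdef]
        rw [← Finset.sum_mul_sum]
        ring
      calc ∫ ω, fens Rs Z f (X₀ ω) ω ^ 2 ∂μ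
          = (1 / (M:ℝ)) ^ 2 * ∑ m : Fin M, ∑ m' : Fin M, ∫ ω, gm m ω * gm m' ω ∂μ := by
            rw [h1, integral_const_mul,
              integral_finset_sum _ (fun m _ => integrable_finset_sum _
                (fun m' _ => aux_int_mul (hfmX₀L2 m) (hfmX₀L2 m')))]
            congr 1
            exact Finset.sum_congr rfl fun m _ =>
              integral_finset_sum _ fun m' _ => aux_int_mul (hfmX₀L2 m) (hfmX₀L2 m')
        _ ≤ (1 / (M:ℝ)) ^ 2 * ∑ _m : Fin M, ∑ _m' : Fin M, ∫ ω, g ω ^ 2 ∂μ := by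
            refine mul_le_mul_of_nonneg_left ?_ (by positivity)
            exact Finset.sum_le_sum fun m _ => Finset.sum_le_sum fun m' _ => hcross m m'
        _ = ∫ ω, g ω ^ 2 ∂μ := by
            simp only [Finset.sum_const, Finset.card_univ, Fintype.card_fin, nsmul_eq_mul]
            field_simp
    rw [show (fun ω => (Y₀ ω - fens Rs Z f (X₀ ω) ω) ^ 2)
        = fun ω => (Y₀ ω - (fun ω' => fens Rs Z f (X₀ ω') ω') ω) ^ 2 from rfl]
    rw [aux_expand hY₀L2 hensL2, aux_expand hY₀L2 hfX₀L2]
    have := hlin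
    have := hquad
    linarith
end
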